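/- Let H be an n×n complex matrix whose numerical range (field of values) is contained in the open left half-plane, i.e., Re(z* H z) < 0 for every unit vector z. Let J be an n×n Hermitian positive semi-definite matrix, and suppose H is invertible. Then every eigenvalue λ of H + H^{-*} J (where H^{-*} denotes the inverse of the conjugate transpose of H) has strictly negative real part. -/

import Mathlib

open Matrix
open scoped ComplexOrder

/-- If the numerical range of `H` lies in the open left half-plane, `J` is Hermitian
positive semi-definite and `H` is invertible, then every eigenvalue of
`H + H^{-*} J` has strictly negative real part. -/
theorem stmt_0 (n : ℕ) (H J : Matrix (Fin n) (Fin n) ℂ)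
    (hW : ∀ z : Fin n → ℂ, star z ⬝ᵥ z = 1 → (star z ⬝ᵥ (H *ᵥ z)).re < 0)
    (hJ : J.PosSemidef) (hinv : IsUnit H.det) :
    ∀ μ ∈ spectrum ℂ (H + (Hᴴ)⁻¹ * J), μ.re < 0 := by
  intro μ hμ
  rw [spectrum.mem_iff] at hμ
  -- extract eigenvector
  rw [Matrix.isUnit_iff_isUnit_det, isUnit_iff_ne_zero, not_not] at hμ
  obtain ⟨x, hx0, hx⟩ := Matrix.exists_mulVec_eq_zero_iff.mpr hμ
  have hx' : (H + (Hᴴ)⁻¹ * J) *ᵥ x = μ • x := by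
    have := hx
    rw [sub_mulVec, sub_eq_zero, Algebra.algebraMap_eq_smul_one, Matrix.smul_mulVec,
      Matrix.one_mulVec] at this
    exact this.symm
  -- Hᴴ invertible
  have hHd : IsUnit Hᴴ.det := by rw [Matrix.det_conjTranspose]; exact hinv.star
  have hHH : Hᴴ * (Hᴴ)⁻¹ = 1 := Matrix.mul_nonsing_inv _ hHd
  -- multiply by Hᴴ
  have hmul : Hᴴ * (H + (Hᴴ)⁻¹ * J) = Hᴴ * H + J := by
    rw [Matrix.mul_add, ← Matrix.mul_assoc, hHH, Matrix.one_mul]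
  have key : (Hᴴ * H) *ᵥ x + J *ᵥ x = μ • (Hᴴ *ᵥ x) := by
    have h : (Hᴴ * (H + (Hᴴ)⁻¹ * J)) *ᵥ x = μ • (Hᴴ *ᵥ x) := by
      rw [← Matrix.mulVec_mulVec, hx', Matrix.mulVec_smul]
    rw [hmul, Matrix.add_mulVec] at h
    exact h
  -- dot with star x
  have key2 : star x ⬝ᵥ ((Hᴴ * H) *ᵥ x) + star x ⬝ᵥ (J *ᵥ x)
      = μ * (star x ⬝ᵥ (Hᴴ *ᵥ x)) := by
    have := congrArg (fun v => star x ⬝ᵥ v) key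
    simpa [dotProduct_add, dotProduct_smul, smul_eq_mul] using this
  set a : ℂ := star x ⬝ᵥ ((Hᴴ * H) *ᵥ x) with ha
  set b : ℂ := star x ⬝ᵥ (J *ᵥ x) with hb
  set c : ℂ := star x ⬝ᵥ (H *ᵥ x) with hc
  -- d = star c
  have hd : star x ⬝ᵥ (Hᴴ *ᵥ x) = star c := by
    rw [hc]
    rw [Matrix.dotProduct_mulVec, ← Matrix.star_mulVec, star_dotProduct]
  -- a > 0
  have hy0 : H *ᵥ x ≠ 0 := by
    intro h
    exact hx0 (Matrix.eq_zero_of_mulVec_eq_zero (hinv.ne_zero) h)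
  have hapos : 0 < a := by
    have : a = star (H *ᵥ x) ⬝ᵥ (H *ᵥ x) := by
      rw [ha, ← Matrix.mulVec_mulVec, Matrix.dotProduct_mulVec, ← Matrix.star_mulVec]
    rw [this]
    exact Matrix.dotProduct_star_self_pos_iff.mpr hy0
  have hbnn : 0 ≤ b := hJ.dotProduct_mulVec_nonneg x
  -- c.re < 0 via normalization
  have hs : 0 < (star x ⬝ᵥ x : ℂ) := Matrix.dotProduct_star_self_pos_iff.mpr hx0
  set s : ℂ := star x ⬝ᵥ x with hsdef
  have hsre : 0 < s.re := (Complex.lt_def.mp hs).1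
  have hsim : s.im = 0 := ((Complex.lt_def.mp hs).2).symm
  have hseq : s = (s.re : ℂ) := by
    apply Complex.ext <;> simp [hsim]
  have hcre : c.re < 0 := by
    set t : ℝ := Real.sqrt s.re with ht
    have htpos : 0 < t := Real.sqrt_pos.mpr hsre
    have ht2 : (t : ℝ) * t = s.re := Real.mul_self_sqrt hsre.le
    set z : Fin n → ℂ := ((t : ℂ))⁻¹ • x with hz
    have htne : (t : ℂ) ≠ 0 := by exact_mod_cast htpos.ne'
    have hz1 : star z ⬝ᵥ z = 1 := by
      rw [hz]
      simp only [star_smul, smul_dotProduct, dotProduct_smul, smul_eq_mul, star_inv₀,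
        Complex.star_def, Complex.conj_ofReal]
      rw [← hsdef, hseq, ← ht2]
      push_cast
      field_simp
    have hWz := hW z hz1
    have hzc : star z ⬝ᵥ (H *ᵥ z) = ((t : ℂ))⁻¹ * ((t : ℂ))⁻¹ * c := by
      rw [hz]
      simp only [star_smul, smul_dotProduct, dotProduct_smul, smul_eq_mul, star_inv₀,
        Matrix.mulVec_smul]
      rw [Complex.star_def, Complex.conj_ofReal, ← hc]
      ring
    rw [hzc] at hWz
    have : (((t : ℂ))⁻¹ * ((t : ℂ))⁻¹ * c).re = (t⁻¹ * t⁻¹) * c.re := by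
      have h : ((t : ℂ))⁻¹ * ((t : ℂ))⁻¹ * c = ((t⁻¹ * t⁻¹ : ℝ) : ℂ) * c := by
        push_cast; ring
      rw [h, Complex.re_ofReal_mul]
    rw [this] at hWz
    have htinv : 0 < t⁻¹ * t⁻¹ := by positivity
    nlinarith
  -- conclude
  rw [hd] at key2
  have hcne : star c ≠ 0 := by
    intro h
    have : c = 0 := by simpa using congrArg star h
    rw [this] at hcre; simp at hcre
  have hmu : μ = (a + b) / star c := (eq_div_iff hcne).mpr key2.symm
  have haim : a.im = 0 := ((Complex.lt_def.mp hapos).2).symm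
  have hare : 0 < a.re := (Complex.lt_def.mp hapos).1
  have hbim : b.im = 0 := ((Complex.le_def.mp hbnn).2).symm
  have hbre : 0 ≤ b.re := (Complex.le_def.mp hbnn).1
  have hnsq : 0 < Complex.normSq (star c) := Complex.normSq_pos.mpr hcne
  rw [hmu, Complex.div_re]
  have h1 : (a + b).im = 0 := by simp [haim, hbim]
  rw [h1]
  simp only [zero_mul, zero_div, add_zero]
  have h2 : (star c).re = c.re := by simp [Complex.star_def]
  rw [h2]
  apply div_neg_of_neg_of_pos
  · apply mul_neg_of_pos_of_neg _ hcre
    simp only [Complex.add_re]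
    linarith
  · exact hnsq
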